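/- Let p > 2 be a prime, let f(X) = αX² + βX + γ be a quadratic polynomial over F_p with α ≠ 0, and let S = {(x,y) ∈ F_p² : y < f(x)}. Then for every b ∈ F_p, the difference of consecutive values of the projection function from direction 1 satisfies pr_{S,1}(b+1) − pr_{S,1}(b) = −χ( (β−1)² + 4α(b+1−γ) ), as an equality of integers, where χ is the quadratic character of F_p. -/

import Mathlib

/-- The projection function of the set `S = {(x,y) : y < f(x)}` from direction `d`:
`pr p f d b` is the number of points of `S` on the line `Y = d X + b`. -/
def parabolaProj (p : ℕ) [NeZero p] (f : ZMod p → ZMod p) (d b : ZMod p) : ℕ :=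
  (Finset.univ.filter fun x : ZMod p => (d * x + b).val < (f x).val).card

/-- The difference of consecutive values of the projection function from direction `1` of
the set of points below the parabola `Y = αX² + βX + γ` equals
`−χ((β−1)² + 4α(b+1−γ))`, where `χ` is the quadratic character of `F_p`. -/
theorem proj_below_parabola_consecutive_diff (p : ℕ) [Fact p.Prime] (hp : 2 < p)
    (α β γ : ZMod p) (hα : α ≠ 0) (b : ZMod p) :
    (parabolaProj p (fun x => α * x ^ 2 + β * x + γ) 1 (b + 1) : ℤ) -
      (parabolaProj p (fun x => α * x ^ 2 + β * x + γ) 1 b : ℤ) =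
      - quadraticChar (ZMod p) ((β - 1) ^ 2 + 4 * α * (b + 1 - γ)) := by
  have hp1 : Fact (1 < p) := ⟨by omega⟩
  set F : ZMod p → ZMod p := fun x => α * x ^ 2 + β * x + γ with hFdef
  set D : ZMod p := (β - 1) ^ 2 + 4 * α * (b + 1 - γ) with hD
  have h2 : (2 : ZMod p) ≠ 0 := by
    intro h
    have : ((2 : ℕ) : ZMod p) = 0 := by push_cast; exact h
    rw [ZMod.natCast_eq_zero_iff] at this
    have := Nat.le_of_dvd (by norm_num) this
    omega
  have h4α : (4 : ZMod p) * α ≠ 0 := by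
    have h4 : (4 : ZMod p) = 2 * 2 := by norm_num
    exact mul_ne_zero (h4 ▸ mul_ne_zero h2 h2) hα
  have h2α : (2 : ZMod p) * α ≠ 0 := mul_ne_zero h2 hα
  have hneg : ((-1 : ZMod p)).val = p - 1 := by
    have h1 : ((p - 1 : ℕ) : ZMod p) = -1 := by
      push_cast [Nat.cast_sub (by omega : 1 ≤ p)]
      simp
    rw [← h1, ZMod.val_natCast, Nat.mod_eq_of_lt (by omega)]
  set A := Finset.univ.filter fun x : ZMod p => (1 * x + (b + 1)).val < (F x).val with hA
  set B := Finset.univ.filter fun x : ZMod p => (1 * x + b).val < (F x).val with hB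
  set R := Finset.univ.filter fun x : ZMod p => F x = x + b + 1 with hR
  -- the key counting identity
  have key : A.card + R.card = B.card + 1 := by
    rw [hA, hB, hR, Finset.card_filter, Finset.card_filter, Finset.card_filter]
    have hone : (∑ x : ZMod p, if x = -1 - b then 1 else 0) = 1 := by
      simp
    have rhs_eq : (∑ x : ZMod p, if (1 * x + b).val < (F x).val then 1 else 0) + 1 =
        ∑ x : ZMod p, ((if (1 * x + b).val < (F x).val then 1 else 0) +
          if x = -1 - b then 1 else 0) := by
      rw [Finset.sum_add_distrib, hone]
    rw [rhs_eq, ← Finset.sum_add_distrib]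
    refine Finset.sum_congr rfl fun x _ => ?_
    by_cases hx : x = -1 - b
    · subst hx
      have e1 : 1 * (-1 - b) + (b + 1) = 0 := by ring
      have e2 : 1 * (-1 - b) + b = -1 := by ring
      have e3 : -1 - b + b + 1 = 0 := by ring
      rw [e1, e2, e3, ZMod.val_zero, hneg]
      have hlt : (F (-1 - b)).val < p := ZMod.val_lt _
      by_cases h0 : F (-1 - b) = 0
      · simp [h0, ZMod.val_zero]
      · have hv : 0 < (F (-1 - b)).val := ZMod.val_pos.mpr h0
        have hnl : ¬ p - 1 < (F (-1 - b)).val := by omega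
        simp [h0, hv, hnl]
    · have hxb : x + b ≠ -1 := fun h => hx (by linear_combination h)
      have hvlt : (x + b).val + 1 < p := by
        have h1 : (x + b).val < p := ZMod.val_lt _
        rcases Nat.lt_or_ge ((x + b).val + 1) p with h | h
        · exact h
        · exfalso
          apply hxb
          apply ZMod.val_injective
          rw [hneg]; omega
      have hv1 : ((x + b) + 1).val = (x + b).val + 1 := by
        rw [ZMod.val_add_of_lt (by rw [ZMod.val_one]; exact hvlt)]
        rw [ZMod.val_one]
      have e1 : 1 * x + (b + 1) = (x + b) + 1 := by ring
      have e2 : 1 * x + b = x + b := by ring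
      have e3 : x + b + 1 = (x + b) + 1 := by ring
      rw [e1, e2, e3, hv1]
      have hRiff : F x = (x + b) + 1 ↔ (F x).val = (x + b).val + 1 := by
        rw [← hv1]
        exact ⟨fun h => by rw [h], fun h => ZMod.val_injective p h⟩
      by_cases hr : F x = (x + b) + 1
      · have := hRiff.mp hr
        simp only [if_pos hr, if_neg hx]
        split_ifs <;> omega
      · have hne : (F x).val ≠ (x + b).val + 1 := fun h => hr (hRiff.mpr h)
        simp only [if_neg hr, if_neg hx]
        split_ifs <;> omega
  -- counting roots of the quadratic via the quadratic character
  have hRcard : (R.card : ℤ) = quadraticChar (ZMod p) D + 1 := by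
    have hiff : ∀ x : ZMod p, (F x = x + b + 1) ↔ ((2 * α * x + (β - 1)) ^ 2 = D) := by
      intro x
      rw [← sub_eq_zero, ← sub_eq_zero (a := (2 * α * x + (β - 1)) ^ 2)]
      have keyeq : (2 * α * x + (β - 1)) ^ 2 - D = (4 * α) * (F x - (x + b + 1)) := by
        rw [hD, hFdef]; ring
      rw [keyeq, mul_eq_zero, or_iff_right h4α]
    have hbij : R.card = (Finset.univ.filter fun y : ZMod p => y ^ 2 = D).card := by
      refine Finset.card_nbij' (fun x => 2 * α * x + (β - 1))
        (fun y => (y - (β - 1)) * (2 * α)⁻¹) ?_ ?_ ?_ ?_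
      · intro x hx
        rw [Finset.mem_coe, Finset.mem_filter] at hx
        exact Finset.mem_filter.mpr ⟨Finset.mem_univ _, (hiff x).mp hx.2⟩
      · intro y hy
        rw [Finset.mem_coe, Finset.mem_filter] at hy
        rw [Finset.mem_coe, hR, Finset.mem_filter]
        refine ⟨Finset.mem_univ _, (hiff _).mpr ?_⟩
        rw [mul_comm (2 * α)]
        rw [mul_assoc, inv_mul_cancel₀ h2α, mul_one, sub_add_cancel]
        exact hy.2
      · intro x _
        field_simp
        ring
      · intro y _
        show 2 * α * ((y - (β - 1)) * (2 * α)⁻¹) + (β - 1) = y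
        rw [mul_comm (2 * α), mul_assoc, inv_mul_cancel₀ h2α, mul_one, sub_add_cancel]
    have := quadraticChar_card_sqrts (by rw [ZMod.ringChar_zmod_n]; omega) D
    rw [Set.toFinset_setOf] at this
    rw [hbij, this]
  -- assemble
  have hAdef : parabolaProj p F 1 (b + 1) = A.card := rfl
  have hBdef : parabolaProj p F 1 b = B.card := rfl
  show (parabolaProj p F 1 (b + 1) : ℤ) - (parabolaProj p F 1 b : ℤ) =
    - quadraticChar (ZMod p) D
  rw [hAdef, hBdef]
  have keyZ : (A.card : ℤ) + R.card = B.card + 1 := by exact_mod_cast key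
  linarith [hRcard, keyZ]
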